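/- Suppose U(s,t) satisfies U(s,t)ᵀ C(t)^{−1} U(s,t) = e^{−2σ(t−s)} C(s)^{−1} with C(t), C(s) symmetric positive definite. Then there exists an orthogonal matrix Q such that U(s,t) = e^{−σ(t−s)} C(t)^{1/2} Q C(s)^{−1/2}, and consequently ‖U(s,t)‖₂ ≤ e^{−σ(t−s)} √(‖C(t)‖₂ · ‖C(s)^{−1}‖₂). -/

import Mathlib

open MeasureTheory Matrix

open scoped ComplexOrder in
/-- The square root of a positive semidefinite matrix, as defined in the older Mathlib
(removed from current Mathlib). -/
noncomputable def Matrix.PosSemidef.sqrt {n 𝕜 : Type*} [Fintype n] [RCLike 𝕜] [DecidableEq n]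
    {A : Matrix n n 𝕜} (hA : A.PosSemidef) : Matrix n n 𝕜 :=
  hA.1.eigenvectorUnitary.1 * diagonal ((↑) ∘ (√·) ∘ hA.1.eigenvalues) *
    (star hA.1.eigenvectorUnitary : Matrix n n 𝕜)

noncomputable def opNorm {d : ℕ} (M : Matrix (Fin d) (Fin d) ℝ) : ℝ :=
  ‖Matrix.toEuclideanCLM (𝕜 := ℝ) M‖

lemma psd_sqrt_mul_self' {d : ℕ} {A : Matrix (Fin d) (Fin d) ℝ} (hA : A.PosSemidef) :
    hA.sqrt * hA.sqrt = A := by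
  let C : Matrix (Fin d) (Fin d) ℝ := hA.1.eigenvectorUnitary
  let E := diagonal ((↑) ∘ (√·) ∘ hA.1.eigenvalues : Fin d → ℝ)
  suffices C * (E * (star C * C) * E) * star C = A by
    show C * E * star C * (C * E * star C) = A
    rw [show C * E * star C * (C * E * star C) = C * (E * (star C * C) * E) * star C by
      simp only [mul_assoc]]
    exact this
  have : E * E = diagonal ((↑) ∘ hA.1.eigenvalues) := by
    rw [diagonal_mul_diagonal]
    congr! with v
    simp [Real.mul_self_sqrt (hA.eigenvalues_nonneg v)]
  have h := hA.1.spectral_theorem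
  rw [Unitary.conjStarAlgAut_apply] at h
  have hCC : star C * C = 1 := Unitary.coe_star_mul_self _
  rw [hCC, mul_one, this]
  exact h.symm

lemma psd_sqrt_conjTranspose' {d : ℕ} {A : Matrix (Fin d) (Fin d) ℝ} (hA : A.PosSemidef) :
    (hA.sqrt)ᴴ = hA.sqrt := by
  let C : Matrix (Fin d) (Fin d) ℝ := hA.1.eigenvectorUnitary
  let E := diagonal ((↑) ∘ (√·) ∘ hA.1.eigenvalues : Fin d → ℝ)
  have hE : Eᴴ = E := by
    rw [conjTranspose_eq_transpose_of_trivial]; exact diagonal_transpose _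
  show (C * E * star C)ᴴ = C * E * star C
  rw [conjTranspose_mul, conjTranspose_mul, star_eq_conjTranspose, conjTranspose_conjTranspose,
    hE, mul_assoc]

open scoped Matrix.Norms.L2Operator in
lemma opNorm_eq {d : ℕ} (M : Matrix (Fin d) (Fin d) ℝ) : opNorm M = ‖M‖ := rfl

open scoped Matrix.Norms.L2Operator in
set_option maxHeartbeats 1000000 in
theorem stmt16 {d : ℕ} (σ s t : ℝ) (hσ : 0 ≤ σ) (hst : s ≤ t)
    (Ct Cs U : Matrix (Fin d) (Fin d) ℝ) (hCt : Ct.PosDef) (hCs : Cs.PosDef)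
    (hU : Uᵀ * Ct⁻¹ * U = Real.exp (-2 * σ * (t - s)) • Cs⁻¹) :
    (∃ Q : Matrix (Fin d) (Fin d) ℝ, Qᵀ * Q = 1 ∧
      U = Real.exp (-σ * (t - s)) • (hCt.posSemidef.sqrt * Q * (hCs.posSemidef.sqrt)⁻¹)) ∧
    opNorm U ≤ Real.exp (-σ * (t - s)) * Real.sqrt (opNorm Ct * opNorm Cs⁻¹) := by
  classical
  set A := hCt.posSemidef.sqrt with hAdef
  set B := hCs.posSemidef.sqrt with hBdef
  have hA2 : A * A = Ct := psd_sqrt_mul_self' hCt.posSemidef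
  have hB2 : B * B = Cs := psd_sqrt_mul_self' hCs.posSemidef
  have hAH : Aᴴ = A := psd_sqrt_conjTranspose' hCt.posSemidef
  have hBH : Bᴴ = B := psd_sqrt_conjTranspose' hCs.posSemidef
  have hAt : Aᵀ = A := hAH
  have hBt : Bᵀ = B := hBH
  -- invertibility
  have hdetA : IsUnit A.det := by
    have h : A.det * A.det = Ct.det := by rw [← Matrix.det_mul, hA2]
    have : Ct.det ≠ 0 := ne_of_gt hCt.det_pos
    exact isUnit_iff_ne_zero.2 (fun h0 => this (by rw [← h, h0, mul_zero]))
  have hdetB : IsUnit B.det := by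
    have h : B.det * B.det = Cs.det := by rw [← Matrix.det_mul, hB2]
    have : Cs.det ≠ 0 := ne_of_gt hCs.det_pos
    exact isUnit_iff_ne_zero.2 (fun h0 => this (by rw [← h, h0, mul_zero]))
  have hAinv : A * A⁻¹ = 1 := Matrix.mul_nonsing_inv A hdetA
  have hAinv' : A⁻¹ * A = 1 := Matrix.nonsing_inv_mul A hdetA
  have hBinv : B * B⁻¹ = 1 := Matrix.mul_nonsing_inv B hdetB
  have hBinv' : B⁻¹ * B = 1 := Matrix.nonsing_inv_mul B hdetB
  have hCtinv : Ct⁻¹ = A⁻¹ * A⁻¹ := by rw [← hA2, Matrix.mul_inv_rev]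
  have hCsinv : Cs⁻¹ = B⁻¹ * B⁻¹ := by rw [← hB2, Matrix.mul_inv_rev]
  set Q : Matrix (Fin d) (Fin d) ℝ := Real.exp (σ * (t - s)) • (A⁻¹ * U * B) with hQdef
  have hexp : Real.exp (σ * (t - s)) * Real.exp (σ * (t - s)) *
      Real.exp (-2 * σ * (t - s)) = 1 := by
    rw [← Real.exp_add, ← Real.exp_add, ← Real.exp_zero]; ring_nf
  have hQtQ : Qᵀ * Q = 1 := by
    have hAinvT : (A⁻¹)ᵀ = A⁻¹ := by rw [Matrix.transpose_nonsing_inv, hAt]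
    have key : Qᵀ * Q = (Real.exp (σ * (t - s)) * Real.exp (σ * (t - s))) •
        (B * (Uᵀ * Ct⁻¹ * U) * B) := by
      rw [hQdef, Matrix.transpose_smul, Matrix.smul_mul, Matrix.mul_smul, smul_smul,
        Matrix.transpose_mul, Matrix.transpose_mul, hAinvT, hBt, hCtinv]
      congr 1
      simp only [mul_assoc]
    rw [key, hU, Matrix.mul_smul, Matrix.smul_mul, smul_smul, hexp, one_smul, hCsinv]
    calc B * (B⁻¹ * B⁻¹) * B = B * (B⁻¹ * (B⁻¹ * B)) := by simp only [mul_assoc]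
      _ = 1 := by rw [hBinv', mul_one, hBinv]
  have hUeq : U = Real.exp (-σ * (t - s)) • (A * Q * B⁻¹) := by
    rw [hQdef, Matrix.mul_smul, Matrix.smul_mul, smul_smul, ← Real.exp_add]
    have : -σ * (t - s) + σ * (t - s) = 0 := by ring
    rw [this, Real.exp_zero, one_smul]
    calc U = (A * A⁻¹) * U * (B * B⁻¹) := by rw [hAinv, hBinv, one_mul, mul_one]
      _ = A * (A⁻¹ * U * B) * B⁻¹ := by simp only [mul_assoc]
  refine ⟨⟨Q, hQtQ, hUeq⟩, ?_⟩
  -- norm bound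
  have hQH : Qᴴ = Qᵀ := rfl
  have hQnorm : ‖Q‖ ≤ 1 := by
    have h1 : ‖Qᴴ * Q‖ = ‖Q‖ * ‖Q‖ := Matrix.l2_opNorm_conjTranspose_mul_self Q
    rw [hQH, hQtQ] at h1
    have hone : ‖(1 : Matrix (Fin d) (Fin d) ℝ)‖ ≤ 1 := by
      rw [Matrix.cstar_norm_def, _root_.map_one]
      exact ContinuousLinearMap.norm_id_le
    nlinarith [norm_nonneg Q]
  have hAnorm : ‖A‖ = Real.sqrt ‖Ct‖ := by
    have h1 : ‖Aᴴ * A‖ = ‖A‖ * ‖A‖ := Matrix.l2_opNorm_conjTranspose_mul_self A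
    rw [hAH, hA2] at h1
    rw [h1, Real.sqrt_mul_self (norm_nonneg A)]
  have hBinvH : (B⁻¹)ᴴ = B⁻¹ := by
    rw [Matrix.conjTranspose_nonsing_inv, hBH]
  have hBnorm : ‖B⁻¹‖ = Real.sqrt ‖Cs⁻¹‖ := by
    have h1 : ‖(B⁻¹)ᴴ * B⁻¹‖ = ‖B⁻¹‖ * ‖B⁻¹‖ := Matrix.l2_opNorm_conjTranspose_mul_self B⁻¹
    rw [hBinvH, ← hCsinv] at h1
    rw [h1, Real.sqrt_mul_self (norm_nonneg B⁻¹)]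
  have hnorm : ‖U‖ ≤ Real.exp (-σ * (t - s)) * (‖A‖ * ‖B⁻¹‖) := by
    rw [hUeq, norm_smul, Real.norm_eq_abs, abs_of_pos (Real.exp_pos _)]
    refine mul_le_mul_of_nonneg_left ?_ (Real.exp_pos _).le
    calc ‖A * Q * B⁻¹‖ ≤ ‖A * Q‖ * ‖B⁻¹‖ := Matrix.l2_opNorm_mul _ _
      _ ≤ (‖A‖ * ‖Q‖) * ‖B⁻¹‖ :=
        mul_le_mul_of_nonneg_right (Matrix.l2_opNorm_mul _ _) (norm_nonneg _)
      _ ≤ (‖A‖ * 1) * ‖B⁻¹‖ := by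
        refine mul_le_mul_of_nonneg_right ?_ (norm_nonneg _)
        exact mul_le_mul_of_nonneg_left hQnorm (norm_nonneg _)
      _ = ‖A‖ * ‖B⁻¹‖ := by ring
  rw [opNorm_eq, opNorm_eq, opNorm_eq]
  calc ‖U‖ ≤ Real.exp (-σ * (t - s)) * (‖A‖ * ‖B⁻¹‖) := hnorm
    _ = Real.exp (-σ * (t - s)) * Real.sqrt (‖Ct‖ * ‖Cs⁻¹‖) := by
      rw [hAnorm, hBnorm, ← Real.sqrt_mul (norm_nonneg _)]
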